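/- arXiv:math/0703541 — 4 statements merged into one kernel-verified Lean document; each statement's English description precedes it below -/
import Mathlib

section
/- Let p be a prime, k a field of characteristic p, C a finite group, and M a finitely generated kC-module that is projective. If c ∈ C is a p-singular element (its order is divisible by p), then the character (trace function) of M vanishes at c: Tr(c, M) = 0. -/
open Finset LinearMap

/-- Higman's criterion, easy direction: a projective `kC`-module admits a `k`-linear
endomorphism `θ` whose "relative trace" `∑ g, ρ g ∘ θ ∘ ρ g⁻¹` is the identity. -/
theorem exists_higman {k : Type*} [Field k] {C : Type*} [Group C] [Fintype C]
    {M : Type*} [AddCommGroup M] [Module k M] [FiniteDimensional k M]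
    (ρ : Representation k C M) (hproj : Module.Projective (MonoidAlgebra k C) ρ.asModule) :
    ∃ θ : M →ₗ[k] M, ∀ m : M, ∑ g : C, ρ g (θ (ρ g⁻¹ m)) = m := by
  classical
  haveI := hproj
  let A := MonoidAlgebra k C
  let N := ρ.asModule
  let e : N ≃+ M := ρ.asModuleEquiv
  let ι := Module.Free.ChooseBasisIndex k M
  let b : Module.Basis ι k M := Module.Free.chooseBasis k M
  let tot : (ι →₀ A) →ₗ[A] N := Finsupp.linearCombination A (fun i => e.symm (b i))
  have htot : Function.Surjective tot := by
    intro n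
    refine ⟨(b.repr (e n)).mapRange (algebraMap k A) (map_zero _), ?_⟩
    have : tot ((b.repr (e n)).mapRange (algebraMap k A) (map_zero _))
        = (b.repr (e n)).sum fun i r => algebraMap k A r • e.symm (b i) := by
      rw [Finsupp.linearCombination_apply]
      exact Finsupp.sum_mapRange_index (by simp)
    rw [this]
    have h2 : ((b.repr (e n)).sum fun i r => algebraMap k A r • e.symm (b i))
        = e.symm ((b.repr (e n)).sum fun i r => r • b i) := by
      rw [map_finsuppSum]
      exact Finsupp.sum_congr fun i _ => (ρ.asModuleEquiv_symm_map_smul _ _).symm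
    rw [h2]
    have h3 : ((b.repr (e n)).sum fun i r => r • b i) = e n := by
      conv_rhs => rw [← b.linearCombination_repr (e n)]
      rfl
    rw [h3]
    exact e.symm_apply_apply n
  obtain ⟨s, hs⟩ := Module.projective_lifting_property tot LinearMap.id htot
  -- the Higman endomorphism
  have hsmul : ∀ (r : k) (m : M),
      s (e.symm (r • m)) = algebraMap k A r • s (e.symm m) := by
    intro r m
    show s (ρ.asModuleEquiv.symm (r • m)) = algebraMap k A r • s (ρ.asModuleEquiv.symm m)
    rw [ρ.asModuleEquiv_symm_map_smul, map_smul]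
  let θ : M →ₗ[k] M :=
    { toFun := fun m => ∑ i, ((s (e.symm m)) i).coeff 1 • b i
      map_add' := by
        intro x y
        have hadd : s (e.symm (x + y)) = s (e.symm x) + s (e.symm y) := by
          rw [map_add, map_add]
        simp only [hadd]
        rw [← Finset.sum_add_distrib]
        refine Finset.sum_congr rfl fun i _ => ?_
        rw [Finsupp.add_apply]
        show (s (e.symm x) i + s (e.symm y) i).coeff 1 • b i = _
        rw [MonoidAlgebra.coeff_add, Finsupp.add_apply, add_smul]
      map_smul' := by
        intro r m
        show ∑ i, ((s (e.symm (r • m))) i).coeff 1 • b i = _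
        rw [hsmul]
        simp only [RingHom.id_apply, Finset.smul_sum]
        refine Finset.sum_congr rfl fun i _ => ?_
        rw [Finsupp.smul_apply, smul_eq_mul]
        have halg : (algebraMap k A) r = MonoidAlgebra.single (1 : C) r := rfl
        rw [halg, MonoidAlgebra.coeff_single_mul_apply, inv_one, one_mul, mul_smul] }
  refine ⟨θ, fun m => ?_⟩
  have h1 : ∀ g : C, θ (ρ g⁻¹ m) = ∑ i, ((s (e.symm m)) i).coeff g • b i := by
    intro g
    show ∑ i, ((s (e.symm (ρ g⁻¹ m))) i).coeff 1 • b i = _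
    have : e.symm (ρ g⁻¹ m) = MonoidAlgebra.of k C g⁻¹ • e.symm m :=
      ρ.asModuleEquiv_symm_map_rho g⁻¹ m
    rw [this, map_smul]
    refine Finset.sum_congr rfl fun i _ => ?_
    rw [Finsupp.smul_apply]
    show ((MonoidAlgebra.single (g⁻¹ : C) (1:k)) * (s (e.symm m)) i).coeff 1 • b i = _
    rw [MonoidAlgebra.coeff_single_mul_apply, inv_inv, mul_one, one_mul]
  calc ∑ g : C, ρ g (θ (ρ g⁻¹ m))
      = ∑ g : C, ∑ i, ((s (e.symm m)) i).coeff g • ρ g (b i) := by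
        refine Finset.sum_congr rfl fun g _ => ?_
        rw [h1, map_sum]
        exact Finset.sum_congr rfl fun i _ => (map_smul _ _ _)
    _ = ∑ i, ∑ g : C, ((s (e.symm m)) i).coeff g • ρ g (b i) := Finset.sum_comm
    _ = ∑ i, e ((s (e.symm m)) i • e.symm (b i)) := by
        refine Finset.sum_congr rfl fun i _ => ?_
        rw [show e ((s (e.symm m)) i • e.symm (b i)) = ρ.asAlgebraHom ((s (e.symm m)) i) (e (e.symm (b i))) from ρ.asModuleEquiv_map_smul _ _]
        rw [e.apply_symm_apply]
        -- asAlgebraHom a v = ∑ g, a g • ρ g v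
        set a := (s (e.symm m)) i
        have : ρ.asAlgebraHom a (b i)
            = ∑ g : C, a.coeff g • ρ g (b i) := by
          conv_lhs => rw [← MonoidAlgebra.sum_coeff_single a]
          rw [Finsupp.sum_fintype _ _ (by simp)]
          rw [map_sum]
          simp only [Representation.asAlgebraHom_single, LinearMap.sum_apply,
            LinearMap.smul_apply]
        rw [this]
    _ = e (∑ i, (s (e.symm m)) i • e.symm (b i)) := (map_sum e _ _).symm
    _ = e (tot (s (e.symm m))) := by
        congr 1
        rw [Finsupp.linearCombination_apply,
          Finsupp.sum_fintype _ _ (by intro i; exact zero_smul A _)]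
    _ = m := by
        have : tot (s (e.symm m)) = e.symm m := by
          rw [← LinearMap.comp_apply, hs]; rfl
        rw [this, e.apply_symm_apply]

/-- Green's theorem on zeros of characters: if `k` is a field of characteristic `p`, `C` a
finite group, and `M` a finite-dimensional `k`-vector space with a `C`-action (given by a
representation `ρ`) making it a projective `kC`-module, then the trace of the action of any
`p`-singular element `c` (an element of order divisible by `p`) vanishes. -/
theorem trace_eq_zero_of_projective_of_p_singular
    (p : ℕ) [Fact p.Prime] (k : Type*) [Field k] [CharP k p]
    (C : Type*) [Group C] [Fintype C]
    (M : Type*) [AddCommGroup M] [Module k M] [FiniteDimensional k M]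
    (ρ : Representation k C M)
    (hproj : Module.Projective (MonoidAlgebra k C) ρ.asModule)
    (c : C) (hc : p ∣ orderOf c) :
    LinearMap.trace k M (ρ c) = 0 := by
  classical
  obtain ⟨θ, hθ⟩ := exists_higman ρ hproj
  have hid : (1 : Module.End k M) = ∑ g : C, (ρ g) * θ * (ρ g⁻¹) := by
    ext m
    simp only [Module.End.one_apply, LinearMap.sum_apply, Module.End.mul_apply]
    exact (hθ m).symm
  set Z := Subgroup.centralizer ({c} : Set C) with hZdef
  haveI : Fintype (C ⧸ Z) := Fintype.ofFinite _
  haveI : Fintype Z := Fintype.ofFinite _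
  let F : C → k := fun g => LinearMap.trace k M (ρ (g * c * g⁻¹) * θ)
  have h2 : LinearMap.trace k M (ρ c) = ∑ g : C, LinearMap.trace k M (ρ (g⁻¹ * c * g) * θ) := by
    conv_lhs => rw [show (ρ c : Module.End k M) = ρ c * 1 from (mul_one _).symm, hid]
    rw [Finset.mul_sum, map_sum]
    refine Finset.sum_congr rfl fun g _ => ?_
    have e1 : (ρ c : Module.End k M) * ((ρ g) * θ * (ρ g⁻¹))
        = (ρ c * ρ g * θ) * (ρ g⁻¹) := by
      simp only [mul_assoc]
    rw [e1, LinearMap.trace_mul_comm]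
    congr 1
    simp only [map_mul, mul_assoc]
  have h3 : ∑ g : C, LinearMap.trace k M (ρ (g⁻¹ * c * g) * θ) = ∑ g : C, F g :=
    Fintype.sum_equiv (Equiv.inv C) _ F (fun g => by simp only [F, Equiv.inv_apply, inv_inv])
  have hcmemZ : c ∈ Z := Subgroup.mem_centralizer_iff.mpr
    (fun g hg => by rw [Set.mem_singleton_iff] at hg; rw [hg])
  have hFcoset : ∀ (q : C ⧸ Z) (z : Z), F (q.out * z) = F q.out := by
    intro q z
    have hz : c * (z : C) = (z : C) * c := Subgroup.mem_centralizer_iff.mp z.2 c rfl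
    have h1 : (z : C) * c * (z : C)⁻¹ = c := by rw [← hz, mul_inv_cancel_right]
    have hgrp : q.out * (z : C) * c * (q.out * (z : C))⁻¹ = q.out * c * q.out⁻¹ := by
      calc q.out * (z : C) * c * (q.out * (z : C))⁻¹
          = q.out * ((z : C) * c * (z : C)⁻¹) * q.out⁻¹ := by group
        _ = q.out * c * q.out⁻¹ := by rw [h1]
    simp only [F, hgrp]
  let E : (C ⧸ Z) × Z ≃ C :=
    { toFun := fun x => x.1.out * x.2.1
      invFun := fun g => (QuotientGroup.mk g,
        ⟨(QuotientGroup.mk g : C ⧸ Z).out⁻¹ * g,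
          QuotientGroup.eq.mp (QuotientGroup.out_eq' (QuotientGroup.mk g))⟩)
      left_inv := by
        rintro ⟨q, z⟩
        have hq : (QuotientGroup.mk (q.out * (z : C)) : C ⧸ Z) = q := by
          rw [QuotientGroup.mk_mul_of_mem _ z.2, QuotientGroup.out_eq']
        refine Prod.ext hq (Subtype.ext ?_)
        show (QuotientGroup.mk (q.out * (z : C)) : C ⧸ Z).out⁻¹ * (q.out * (z : C)) = z
        rw [hq, inv_mul_cancel_left]
      right_inv := by
        intro g
        show (QuotientGroup.mk g : C ⧸ Z).out * ((QuotientGroup.mk g : C ⧸ Z).out⁻¹ * g) = g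
        rw [mul_inv_cancel_left] }
  have h4 : ∑ g : C, F g = ∑ x : (C ⧸ Z) × Z, F (E x) :=
    (Fintype.sum_equiv E _ _ (fun x => rfl)).symm
  have hcard : (Fintype.card Z : k) = 0 := by
    have hdvd : p ∣ Fintype.card Z := by
      have horder : orderOf (⟨c, hcmemZ⟩ : Z) = orderOf c := Subgroup.orderOf_mk c hcmemZ
      exact hc.trans (horder ▸ orderOf_dvd_card)
    exact (CharP.cast_eq_zero_iff k p _).mpr hdvd
  have h5 : ∑ x : (C ⧸ Z) × Z, F (E x) = 0 := by
    rw [Fintype.sum_prod_type]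
    have : ∀ q : C ⧸ Z, ∑ z : Z, F (E (q, z)) = 0 := by
      intro q
      have : ∀ z : Z, F (E (q, z)) = F q.out := fun z => hFcoset q z
      rw [Finset.sum_congr rfl (fun z _ => this z), Finset.sum_const, nsmul_eq_mul]
      simp [hcard]
    rw [Finset.sum_congr rfl (fun q _ => this q), Finset.sum_const, smul_zero]
  rw [h2, h3, h4, h5]
end

section
/- Let G be a finite group and u a torsion unit of augmentation 1 in ℤG with u ≠ 1. Then ε_1(u) = 0, i.e., the coefficient of the identity element in u is zero. -/
open MonoidAlgebra Finset
open scoped Classical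

/-- The partial augmentation of `u ∈ ℤG` at `x ∈ G`: the sum of the coefficients of `u`
over the conjugacy class of `x`. -/
noncomputable def partialAug {G : Type*} [Group G] [Fintype G]
    (x : G) (u : MonoidAlgebra ℤ G) : ℤ :=
  ∑ g : G, if IsConj x g then u.coeff g else 0

/-- The augmentation of `u = Σ a_g g` is `Σ a_g`. -/
noncomputable def augment {G : Type*} [Group G] [Fintype G] (u : MonoidAlgebra ℤ G) : ℤ :=
  ∑ g : G, u.coeff g

/-- Equality case in the triangle inequality for multisets of unit complex numbers. -/
lemma BH.multiset_eq_of_abs_sum (s : Multiset ℂ) (h1 : ∀ z ∈ s, ‖z‖ = 1)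
    (hsum : ‖s.sum‖ = s.card) :
    ∀ z ∈ s, (s.card : ℂ) * z = s.sum := by
  intro z hz
  set t : ℂ := s.sum with ht
  have hre_le : ∀ w ∈ s, ((starRingEnd ℂ) t * w).re ≤ ‖t‖ := by
    intro w hw
    calc ((starRingEnd ℂ) t * w).re ≤ ‖(starRingEnd ℂ) t * w‖ := Complex.re_le_norm _
      _ = ‖t‖ := by rw [norm_mul, Complex.norm_conj, h1 w hw, mul_one]
  have hsum2 : (s.map fun w => ((starRingEnd ℂ) t * w).re).sum = (s.card : ℝ) * ‖t‖ := by
    have e0 : (s.map fun w => ((starRingEnd ℂ) t * w).re)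
        = (s.map fun w => (starRingEnd ℂ) t * w).map Complex.re := by
      rw [Multiset.map_map]; rfl
    have e1 := map_multiset_sum Complex.reAddGroupHom (s.map fun w => (starRingEnd ℂ) t * w)
    have e2 : (s.map fun w => (starRingEnd ℂ) t * w).sum = (starRingEnd ℂ) t * t := by
      have h := Multiset.sum_map_mul_left (s := s) (a := (starRingEnd ℂ) t) (f := id)
      simpa using h
    rw [e0, ← Complex.coe_reAddGroupHom, ← e1, e2]
    show ((starRingEnd ℂ) t * t).re = _
    rw [mul_comm, Complex.mul_conj, Complex.normSq_eq_norm_sq, Complex.ofReal_pow, ← Complex.ofReal_pow,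
      Complex.ofReal_re, hsum]
    ring
  have heach : ∀ w ∈ s, ((starRingEnd ℂ) t * w).re = ‖t‖ := by
    by_contra h
    push_neg at h
    obtain ⟨w, hw, hne⟩ := h
    have hlt : (s.map fun w => ((starRingEnd ℂ) t * w).re).sum
        < (s.map fun _ => ‖t‖).sum :=
      Multiset.sum_lt_sum hre_le ⟨w, hw, lt_of_le_of_ne (hre_le w hw) hne⟩
    rw [hsum2, Multiset.map_const', Multiset.sum_replicate, nsmul_eq_mul] at hlt
    exact lt_irrefl _ hlt
  have hre : ((starRingEnd ℂ) t * z).re = ‖t‖ := heach z hz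
  have habs : ‖(starRingEnd ℂ) t * z‖ = ‖t‖ := by
    rw [norm_mul, Complex.norm_conj, h1 z hz, mul_one]
  have him : ((starRingEnd ℂ) t * z).im = 0 := by
    have h4 := Complex.sq_norm ((starRingEnd ℂ) t * z)
    rw [Complex.normSq_apply, habs, hre] at h4
    have h5 : ((starRingEnd ℂ) t * z).im * ((starRingEnd ℂ) t * z).im = 0 := by nlinarith
    exact mul_self_eq_zero.mp h5
  have h5 : (starRingEnd ℂ) t * z = ((‖t‖ : ℝ) : ℂ) := by
    apply Complex.ext
    · rw [hre, Complex.ofReal_re]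
    · rw [him, Complex.ofReal_im]
  have hc : ((s.card : ℕ) : ℂ) ≠ 0 := by
    have h0 : s.card ≠ 0 := by
      intro h0
      rw [Multiset.card_eq_zero] at h0
      simp [h0] at hz
    exact_mod_cast h0
  have h6 : (t * (starRingEnd ℂ) t) * z = t * ((‖t‖ : ℝ) : ℂ) := by
    rw [mul_assoc, h5]
  rw [Complex.mul_conj, Complex.normSq_eq_norm_sq, hsum] at h6
  push_cast at h6
  apply mul_left_cancel₀ hc
  linear_combination h6

/-- Berman–Higman: a nontrivial torsion unit of augmentation one in `ℤG` has zero
coefficient at the identity. -/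
theorem coeff_one_eq_zero_of_torsion_unit {G : Type*} [Group G] [Fintype G]
    (u : (MonoidAlgebra ℤ G)ˣ) (htor : IsOfFinOrder u)
    (haug : augment (u : MonoidAlgebra ℤ G) = 1) (hne : u ≠ 1) :
    (u : MonoidAlgebra ℤ G).coeff 1 = 0 := by
  classical
  by_contra hcoeff
  -- the base-change homomorphism `ℤG → ℂG`
  set φ : MonoidAlgebra ℤ G →ₐ[ℤ] MonoidAlgebra ℂ G :=
    MonoidAlgebra.lift ℤ (MonoidAlgebra ℂ G) G (MonoidAlgebra.of ℂ G) with hφdef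
  have hφ : ∀ (f : MonoidAlgebra ℤ G) (g : G), (φ f).coeff g = ((f.coeff g : ℤ) : ℂ) := by
    intro f
    induction f using MonoidAlgebra.induction_linear with
    | zero => intro g; simp
    | add a b ha hb =>
      intro g
      have h1 : (φ (a + b)).coeff g = (φ a).coeff g + (φ b).coeff g := by rw [map_add]; rfl
      have h2 : ((a + b : MonoidAlgebra ℤ G).coeff g : ℂ) = ((a.coeff g : ℤ) : ℂ) + ((b.coeff g : ℤ) : ℂ) := by
        push_cast [MonoidAlgebra.coeff_add, Finsupp.add_apply]; ring
      rw [h1, h2, ha g, hb g]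
    | single a r =>
      intro g
      rw [hφdef]
      show ((MonoidAlgebra.lift ℤ (MonoidAlgebra ℂ G) G) (MonoidAlgebra.of ℂ G)
        (MonoidAlgebra.single a r)).coeff g = _
      by_cases hag : a = g
      · subst hag
        simp [MonoidAlgebra.lift_single, MonoidAlgebra.of_apply, zsmul_eq_mul,
          MonoidAlgebra.coeff_mul_single_apply, MonoidAlgebra.intCast_def, MonoidAlgebra.coeff_single,
          Finsupp.single_apply]
      · simp [MonoidAlgebra.lift_single, MonoidAlgebra.of_apply, zsmul_eq_mul,
          MonoidAlgebra.coeff_mul_single_apply, MonoidAlgebra.intCast_def, MonoidAlgebra.coeff_single,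
          Finsupp.single_apply, hag, mul_inv_eq_one, eq_comm]
  set m : ℕ := orderOf u with hm
  have hmpos : 0 < m := htor.orderOf_pos
  set v : MonoidAlgebra ℂ G := φ ↑u with hv
  have hvpow : v ^ m = 1 := by
    rw [hv, ← map_pow, ← Units.val_pow_eq_pow_val, pow_orderOf_eq_one u, Units.val_one, map_one]
  set b : Module.Basis G ℂ (MonoidAlgebra ℂ G) := MonoidAlgebra.basis G ℂ with hb
  set L : Module.End ℂ (MonoidAlgebra ℂ G) := LinearMap.mulLeft ℂ v with hL
  set M : Matrix G G ℂ := LinearMap.toMatrixAlgEquiv b L with hM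
  have hMentry : ∀ i j : G, M i j = v.coeff (i * j⁻¹) := by
    intro i j
    have hbj : b j = MonoidAlgebra.single j 1 := rfl
    have hrep : ∀ x : MonoidAlgebra ℂ G, (b.repr x) i = x.coeff i := fun _ => rfl
    rw [hM, LinearMap.toMatrixAlgEquiv_apply, hbj, hrep, hL, LinearMap.mulLeft_apply,
      MonoidAlgebra.coeff_mul_single_apply, mul_one]
  have hMpow : M ^ m = 1 := by
    have hLm : L ^ m = 1 := by
      rw [hL, LinearMap.pow_mulLeft, hvpow]
      ext x
      simp [LinearMap.mulLeft_apply]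
    rw [hM, ← map_pow, hLm, map_one]
  -- the characteristic polynomial
  set p : Polynomial ℂ := M.charpoly with hp
  have hpmonic : p.Monic := M.charpoly_monic
  have hpsplits : p.Splits := IsAlgClosed.splits p
  have hpdeg : p.natDegree = Fintype.card G := M.charpoly_natDegree_eq_dim
  have hcard : Multiset.card p.roots = Fintype.card G := by
    rw [← hpdeg]
    exact (Polynomial.splits_iff_card_roots).mp hpsplits
  -- every root of the characteristic polynomial is an `m`-th root of unity
  have hroot_pow : ∀ μ ∈ p.roots, μ ^ m = 1 := by
    intro μ hμ
    have hμroot : p.IsRoot μ := (Polynomial.mem_roots'.mp hμ).2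
    have heval : Polynomial.eval μ p = ((Matrix.diagonal fun _ : G => μ) - M).det := by
      have e1 : p = (Matrix.charmatrix M).det := rfl
      have e2 : Polynomial.eval μ ((Matrix.charmatrix M).det)
          = ((Polynomial.evalRingHom μ).mapMatrix (Matrix.charmatrix M)).det :=
        RingHom.map_det (Polynomial.evalRingHom μ) (Matrix.charmatrix M)
      rw [e1, e2]
      congr 1
      ext i j
      by_cases hij : i = j <;>
        simp [hij, Matrix.charmatrix_apply, RingHom.mapMatrix_apply, Matrix.map_apply,
          Matrix.diagonal_apply]
    have hdet : ((Matrix.diagonal fun _ : G => μ) - M).det = 0 := by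
      rw [← heval]; exact hμroot
    obtain ⟨w, hw0, hw⟩ := (Matrix.exists_mulVec_eq_zero_iff).mpr hdet
    have hMw : M.mulVec w = μ • w := by
      funext i
      have h := congrFun hw i
      simp only [Matrix.sub_mulVec, Pi.sub_apply, Pi.zero_apply, sub_eq_zero] at h
      rw [← h, Matrix.mulVec_diagonal]
      rfl
    have hpoww : ∀ k : ℕ, (M ^ k).mulVec w = μ ^ k • w := by
      intro k
      induction k with
      | zero => simp [Matrix.one_mulVec]
      | succ k ih =>
        rw [pow_succ', ← Matrix.mulVec_mulVec, ih, Matrix.mulVec_smul, hMw, smul_smul,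
          pow_succ, mul_comm]
    have hfin : w = μ ^ m • w := by
      have h := hpoww m
      rw [hMpow, Matrix.one_mulVec] at h
      exact h
    obtain ⟨i, hi⟩ := Function.ne_iff.mp hw0
    have h : μ ^ m * w i = 1 * w i := by
      have h := congrFun hfin i
      simp only [Pi.smul_apply, smul_eq_mul] at h
      rw [← h, one_mul]
    exact mul_right_cancel₀ hi h
  have hroot_abs : ∀ μ ∈ p.roots, ‖μ‖ = 1 := by
    intro μ hμ
    have h1 : ‖μ‖ ^ m = 1 := by
      rw [← norm_pow, hroot_pow μ hμ, norm_one]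
    by_contra hne1
    rcases lt_or_gt_of_ne hne1 with h | h
    · have h2 := pow_lt_one₀ (norm_nonneg μ) h hmpos.ne'
      rw [h1] at h2; exact lt_irrefl _ h2
    · have h2 := one_lt_pow₀ h hmpos.ne'
      rw [h1] at h2; exact lt_irrefl _ h2
  -- trace computation
  set N : ℕ := Fintype.card G with hN
  have hNpos : 0 < N := Fintype.card_pos
  have htrace : M.trace = (N : ℂ) * ((((u : MonoidAlgebra ℤ G).coeff 1 : ℤ)) : ℂ) := by
    have hv1 : v.coeff 1 = (((u : MonoidAlgebra ℤ G).coeff 1 : ℤ) : ℂ) := hφ _ 1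
    rw [Matrix.trace]
    have hdiag : ∀ i : G, Matrix.diag M i = v.coeff 1 := by
      intro i
      rw [Matrix.diag_apply, hMentry i i, mul_inv_cancel]
    rw [Finset.sum_congr rfl (fun i _ => hdiag i), Finset.sum_const, Finset.card_univ, hv1]
    simp [nsmul_eq_mul, hN]
  have htrace' : p.roots.sum = (N : ℂ) * (((u : MonoidAlgebra ℤ G).coeff 1 : ℤ) : ℂ) := by
    rw [← htrace, hp]
    exact (Matrix.trace_eq_sum_roots_charpoly (A := M)).symm
  -- the triangle inequality forces all the roots to be equal
  set a : ℤ := (u : MonoidAlgebra ℤ G).coeff 1 with ha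
  have h1a : (1 : ℤ) ≤ |a| := Int.one_le_abs hcoeff
  have habs_sum : ‖p.roots.sum‖ = (N : ℝ) * (|a| : ℝ) := by
    rw [htrace', norm_mul, Complex.norm_natCast, Complex.norm_intCast]
  have hle : ‖p.roots.sum‖ ≤ (N : ℝ) := by
    have h2 : ‖p.roots.sum‖ ≤ ((p.roots.map fun z : ℂ => ‖z‖)).sum := norm_multiset_sum_le _
    have h3 : ((p.roots.map fun z : ℂ => ‖z‖)).sum = (N : ℝ) := by
      have h4 : (p.roots.map fun z : ℂ => ‖z‖) = p.roots.map fun _ : ℂ => (1 : ℝ) :=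
        Multiset.map_congr rfl fun z hz => by
          rw [hroot_abs z hz]
      rw [h4, Multiset.map_const', Multiset.sum_replicate, hcard, nsmul_eq_mul, mul_one]
    rw [← h3]
    exact h2
  have habseq : ‖p.roots.sum‖ = (Multiset.card p.roots : ℝ) := by
    rw [hcard]
    have hge : (N : ℝ) ≤ ‖p.roots.sum‖ := by
      rw [habs_sum]
      have h5 : (1 : ℝ) ≤ (|a| : ℝ) := by exact_mod_cast h1a
      have h6 : (0 : ℝ) < (N : ℝ) := by exact_mod_cast hNpos
      nlinarith
    linarith
  have hall := BH.multiset_eq_of_abs_sum p.roots hroot_abs habseq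
  -- all the roots are equal to ζ
  set ζ : ℂ := p.roots.sum / (N : ℂ) with hζ
  have hNC : ((N : ℕ) : ℂ) ≠ 0 := Nat.cast_ne_zero.mpr hNpos.ne'
  have hall' : ∀ z ∈ p.roots, z = ζ := by
    intro z hz
    have h7 := hall z hz
    rw [hcard] at h7
    rw [hζ, eq_div_iff hNC, mul_comm]
    exact h7
  -- the minimal polynomial is `X - ζ`
  have hint : IsIntegral ℂ M := IsIntegral.of_finite ℂ M
  set q : Polynomial ℂ := minpoly ℂ M with hq
  have hqdvd : q ∣ (Polynomial.X ^ m - Polynomial.C 1) := by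
    apply minpoly.dvd
    rw [Polynomial.C_1, map_sub, map_pow, Polynomial.aeval_X, map_one, hMpow, sub_self]
  have hsqfree : Squarefree (Polynomial.X ^ m - Polynomial.C (1 : ℂ)) :=
    (Polynomial.separable_X_pow_sub_C (1 : ℂ)
      (Nat.cast_ne_zero (R := ℂ).mpr hmpos.ne') one_ne_zero).squarefree
  have hqsqfree : Squarefree q := hsqfree.squarefree_of_dvd hqdvd
  have hqmonic : q.Monic := minpoly.monic hint
  have hqsplits : q.Splits := IsAlgClosed.splits q
  have hqroots_sub : q.roots ≤ p.roots :=
    Polynomial.roots.le_of_dvd hpmonic.ne_zero (minpoly.dvd ℂ M (M.aeval_self_charpoly))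
  have hqroots : ∀ z ∈ q.roots, z = ζ := fun z hz => hall' z (Multiset.subset_of_le hqroots_sub hz)
  have hqdegpos : 0 < q.natDegree := minpoly.natDegree_pos hint
  have hqcard : Multiset.card q.roots = q.natDegree := (Polynomial.splits_iff_card_roots).mp hqsplits
  have hqprod : q = (Polynomial.X - Polynomial.C ζ) ^ q.natDegree := by
    have h1 := hqsplits.eq_prod_roots_of_monic hqmonic
    have h2 : q.roots.map (fun a => Polynomial.X - Polynomial.C a)
        = q.roots.map (fun _ => Polynomial.X - Polynomial.C ζ) :=
      Multiset.map_congr rfl fun z hz => by rw [hqroots z hz]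
    conv_lhs => rw [h1, h2]
    rw [Multiset.map_const', Multiset.prod_replicate, hqcard]
  have hqdeg1 : q.natDegree = 1 := by
    by_contra hd
    have h2 : 2 ≤ q.natDegree := by omega
    have h3 : (Polynomial.X - Polynomial.C ζ) * (Polynomial.X - Polynomial.C ζ) ∣ q := by
      conv_rhs => rw [hqprod]
      calc (Polynomial.X - Polynomial.C ζ) * (Polynomial.X - Polynomial.C ζ)
          = (Polynomial.X - Polynomial.C ζ) ^ 2 := (sq _).symm
        _ ∣ (Polynomial.X - Polynomial.C ζ) ^ q.natDegree := pow_dvd_pow _ h2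
    have hXζ : ¬IsUnit (Polynomial.X - Polynomial.C ζ) := by
      intro hu
      have h4 := Polynomial.natDegree_eq_zero_of_isUnit hu
      rw [Polynomial.natDegree_X_sub_C] at h4
      exact one_ne_zero h4
    exact hXζ (hqsqfree _ h3)
  have hMζ : M = algebraMap ℂ (Matrix G G ℂ) ζ := by
    have h1 := minpoly.aeval ℂ M
    rw [← hq, hqprod, hqdeg1, pow_one, map_sub, Polynomial.aeval_X, Polynomial.aeval_C] at h1
    exact sub_eq_zero.mp h1
  -- off-diagonal coefficients of `u` vanish
  have hg0 : ∀ g : G, g ≠ 1 → (u : MonoidAlgebra ℤ G).coeff g = 0 := by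
    intro g hg
    have h1 : M g 1 = 0 := by
      rw [hMζ, Matrix.algebraMap_matrix_apply, if_neg hg]
    rw [hMentry g 1] at h1
    simp only [inv_one, mul_one] at h1
    rw [hv, hφ] at h1
    exact_mod_cast h1
  have hu1 : (u : MonoidAlgebra ℤ G).coeff 1 = 1 := by
    have h2 : augment (u : MonoidAlgebra ℤ G) = (u : MonoidAlgebra ℤ G).coeff 1 := by
      rw [augment]
      exact Finset.sum_eq_single 1 (fun g _ hg => hg0 g hg)
        (fun h => absurd (Finset.mem_univ 1) h)
    rw [← h2, haug]
  have hueq : (u : MonoidAlgebra ℤ G) = 1 := by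
    apply MonoidAlgebra.ext
    ext g
    by_cases hg : g = 1
    · subst hg
      rw [hu1, MonoidAlgebra.one_def, MonoidAlgebra.coeff_single, Finsupp.single_eq_same]
    · rw [hg0 g hg, MonoidAlgebra.one_def, MonoidAlgebra.coeff_single,
        Finsupp.single_eq_of_ne hg]
  exact hne (Units.ext hueq)
end

section
/- Let G be a finite abelian group and u a torsion unit in ℤG of augmentation 1. Then u is an element of G (i.e., u = g for some g ∈ G); in particular the order of u equals the order of some element of G. -/
open MonoidAlgebra Finset
open scoped Classical

section Aux

variable {G : Type*} [CommGroup G] [Fintype G]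

private lemma heval (χ : G →* ℂˣ) (v : MonoidAlgebra ℤ G) :
    (MonoidAlgebra.lift ℤ ℂ G) ((Units.coeHom ℂ).comp χ) v
      = ∑ g : G, (v.coeff g : ℂ) * (χ g : ℂ) := by
  rw [MonoidAlgebra.lift_apply, Finsupp.sum_fintype]
  · exact Finset.sum_congr rfl fun g _ => by simp [zsmul_eq_mul]
  · intro g; simp

private lemma chi_norm_one (χ : G →* ℂˣ) (g : G) : ‖((χ g : ℂ))‖ = 1 := by
  have h : ((χ g : ℂ)) ^ Fintype.card G = 1 := by
    rw [← Units.val_pow_eq_pow_val, ← map_pow, pow_card_eq_one, map_one, Units.val_one]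
  exact Complex.norm_eq_one_of_pow_eq_one h Fintype.card_ne_zero

end Aux

/-- Higman: every torsion unit of augmentation one in the integral group ring of a finite
abelian group is trivial, i.e. is a group element. -/
theorem torsion_unit_trivial_of_abelian {G : Type*} [CommGroup G] [Fintype G]
    (u : (MonoidAlgebra ℤ G)ˣ) (htor : IsOfFinOrder u)
    (haug : augment (u : MonoidAlgebra ℤ G) = 1) :
    ∃ g : G, (u : MonoidAlgebra ℤ G) = MonoidAlgebra.of ℤ G g := by
  classical
  haveI : NeZero ((Monoid.exponent G : ℂ)) :=
    ⟨by exact_mod_cast Monoid.exponent_ne_zero_of_finite⟩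
  obtain ⟨e⟩ := CommGroup.monoidHom_mulEquiv_of_hasEnoughRootsOfUnity G ℂ
  haveI : Fintype (G →* ℂˣ) := Fintype.ofEquiv G e.symm.toEquiv
  have hcard : Fintype.card (G →* ℂˣ) = Fintype.card G := Fintype.card_congr e.toEquiv
  set a : G → ℂ := fun g => ((u : MonoidAlgebra ℤ G).coeff g : ℂ) with ha
  set f : (G →* ℂˣ) → ℂ :=
    fun χ => (MonoidAlgebra.lift ℤ ℂ G) ((Units.coeHom ℂ).comp χ) (u : MonoidAlgebra ℤ G) with hf
  -- each f χ is a root of unity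
  obtain ⟨n, hn0, hun⟩ := isOfFinOrder_iff_pow_eq_one.mp htor
  have habs : ∀ χ : G →* ℂˣ, ‖(f χ)‖ = 1 := by
    intro χ
    have hpow : f χ ^ n = 1 := by
      rw [hf, ← map_pow, ← Units.val_pow_eq_pow_val, hun, Units.val_one, map_one]
    exact Complex.norm_eq_one_of_pow_eq_one hpow hn0.ne'
  -- f χ⁻¹ is the complex conjugate of f χ
  have hconj : ∀ χ : G →* ℂˣ, f χ⁻¹ = (starRingEnd ℂ) (f χ) := by
    intro χ
    rw [hf]
    simp only [heval]
    rw [map_sum]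
    refine Finset.sum_congr rfl fun g _ => ?_
    rw [map_mul, map_intCast, ← Complex.inv_eq_conj (chi_norm_one χ g)]
    congr 1
    rw [MonoidHom.inv_apply, Units.val_inv_eq_inv_val]
  -- orthogonality of characters
  have horth : ∀ x : G, ∑ χ : G →* ℂˣ, ((χ x : ℂ))
      = if x = 1 then (Fintype.card G : ℂ) else 0 := by
    intro x
    by_cases hx : x = 1
    · simp [hx, hcard]
    · rw [if_neg hx]
      obtain ⟨ψ, hψ⟩ := CommGroup.exists_apply_ne_one_of_hasEnoughRootsOfUnity G ℂ hx
      have key : (ψ x : ℂ) * ∑ χ : G →* ℂˣ, ((χ x : ℂ)) = ∑ χ : G →* ℂˣ, ((χ x : ℂ)) := by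
        rw [Finset.mul_sum]
        refine Fintype.sum_equiv (Equiv.mulLeft ψ) _ _ fun χ => ?_
        simp [Units.val_mul]
      have hne : (ψ x : ℂ) ≠ 1 := fun h => hψ (Units.ext h)
      have := sub_eq_zero.mpr key
      rw [← sub_one_mul] at this
      rcases mul_eq_zero.mp this with h | h
      · exact absurd (sub_eq_zero.mp h) hne
      · exact h
  -- Parseval
  have hterm : ∀ χ : G →* ℂˣ, f χ * f χ⁻¹ = 1 := by
    intro χ
    rw [hconj χ, Complex.mul_conj, Complex.normSq_eq_norm_sq, habs χ]
    norm_num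
  have hT : ∑ χ : G →* ℂˣ, f χ * f χ⁻¹ = (Fintype.card G : ℂ) := by
    simp [hterm, hcard]
  have hexp : ∑ χ : G →* ℂˣ, f χ * f χ⁻¹
      = (Fintype.card G : ℂ) * ∑ g : G, a g ^ 2 := by
    have step : ∀ χ : G →* ℂˣ, f χ * f χ⁻¹
        = ∑ g : G, ∑ h : G, (a g * a h) * ((χ (g * h⁻¹) : ℂ)) := by
      intro χ
      rw [hf]
      simp only [heval]
      rw [Finset.sum_mul_sum]
      refine Finset.sum_congr rfl fun g _ => Finset.sum_congr rfl fun h _ => ?_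
      have : ((χ (g * h⁻¹) : ℂ)) = (χ g : ℂ) * ((χ⁻¹ h : ℂ)) := by
        rw [MonoidHom.inv_apply, map_mul, map_inv, Units.val_mul, Units.val_inv_eq_inv_val]
      rw [this]; ring
    calc ∑ χ : G →* ℂˣ, f χ * f χ⁻¹
        = ∑ χ : G →* ℂˣ, ∑ g : G, ∑ h : G, (a g * a h) * ((χ (g * h⁻¹) : ℂ)) := by
          exact Finset.sum_congr rfl fun χ _ => step χ
      _ = ∑ g : G, ∑ h : G, (a g * a h) * ∑ χ : G →* ℂˣ, ((χ (g * h⁻¹) : ℂ)) := by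
          rw [Finset.sum_comm]
          refine Finset.sum_congr rfl fun g _ => ?_
          rw [Finset.sum_comm]
          refine Finset.sum_congr rfl fun h _ => ?_
          rw [Finset.mul_sum]
      _ = ∑ g : G, ∑ h : G, (a g * a h) *
            (if g * h⁻¹ = 1 then (Fintype.card G : ℂ) else 0) := by
          simp only [horth]
      _ = ∑ g : G, (a g * a g) * (Fintype.card G : ℂ) := by
          refine Finset.sum_congr rfl fun g _ => ?_
          rw [Finset.sum_eq_single g]
          · simp
          · intro h _ hh
            rw [if_neg, mul_zero]
            rw [mul_inv_eq_one]
            exact fun hgh => hh hgh.symm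
          · intro h; exact absurd (Finset.mem_univ g) h
      _ = (Fintype.card G : ℂ) * ∑ g : G, a g ^ 2 := by
          rw [Finset.mul_sum]
          refine Finset.sum_congr rfl fun g _ => by ring
  -- conclude sum of squares of coefficients is 1
  have hcardC : (Fintype.card G : ℂ) ≠ 0 := Nat.cast_ne_zero.mpr Fintype.card_ne_zero
  have hsumsqC : ∑ g : G, a g ^ 2 = 1 := by
    refine (mul_left_cancel₀ hcardC ?_).symm
    rw [mul_one]
    exact hT.symm.trans hexp
  have hsumsq : ∑ g : G, ((u : MonoidAlgebra ℤ G).coeff g) ^ 2 = 1 := by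
    have : ((∑ g : G, ((u : MonoidAlgebra ℤ G).coeff g) ^ 2 : ℤ) : ℂ) = 1 := by
      push_cast
      exact hsumsqC
    exact_mod_cast this
  -- combinatorial endgame
  rw [augment] at haug
  obtain ⟨g₀, hg₀⟩ : ∃ g : G, (u : MonoidAlgebra ℤ G).coeff g ≠ 0 := by
    by_contra h
    push_neg at h
    rw [Finset.sum_congr rfl fun g _ => h g] at haug
    simp at haug
  have hg₀sq : 1 ≤ ((u : MonoidAlgebra ℤ G).coeff g₀) ^ 2 := by
    rcases lt_or_gt_of_ne hg₀ with h | h <;> nlinarith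
  have hzero : ∀ h : G, h ≠ g₀ → (u : MonoidAlgebra ℤ G).coeff h = 0 := by
    intro h hh
    have hsplit : ((u : MonoidAlgebra ℤ G).coeff g₀) ^ 2
        + ∑ g ∈ Finset.univ.erase g₀, ((u : MonoidAlgebra ℤ G).coeff g) ^ 2 = 1 := by
      rw [Finset.add_sum_erase Finset.univ
        (fun g => ((u : MonoidAlgebra ℤ G).coeff g) ^ 2) (Finset.mem_univ g₀)]
      exact hsumsq
    have hrest : ∑ g ∈ Finset.univ.erase g₀, ((u : MonoidAlgebra ℤ G).coeff g) ^ 2 = 0 := by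
      have hnn : 0 ≤ ∑ g ∈ Finset.univ.erase g₀, ((u : MonoidAlgebra ℤ G).coeff g) ^ 2 :=
        Finset.sum_nonneg fun g _ => sq_nonneg _
      omega
    have := (Finset.sum_eq_zero_iff_of_nonneg fun g _ => sq_nonneg _).mp hrest h
      (Finset.mem_erase.mpr ⟨hh, Finset.mem_univ h⟩)
    exact pow_eq_zero_iff (two_ne_zero) |>.mp this
  have hg₀1 : (u : MonoidAlgebra ℤ G).coeff g₀ = 1 := by
    rw [Finset.sum_eq_single g₀ (fun h _ hh => hzero h hh)
      (fun h => absurd (Finset.mem_univ g₀) h)] at haug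
    exact haug
  refine ⟨g₀, ?_⟩
  ext h
  rw [MonoidAlgebra.of_apply, MonoidAlgebra.coeff_single]
  by_cases hh : h = g₀
  · subst hh; rw [hg₀1, Finsupp.single_eq_same]
  · rw [hzero h hh, Finsupp.single_eq_of_ne hh]
end

section
/- Let G be a finite solvable group, p a prime, N a nontrivial normal p-subgroup of G, and u a torsion unit of augmentation 1 in ℤG. Suppose that the image ū of u in ℤ(G/N) has the same order as u, that there is x ∈ G with the image x̄ of the same order as ū and ε_{x̄}(ū) ≠ 0, and that ε_g(u) = 0 for every g ∈ G whose order is strictly greater than the order of u. Then there exists g ∈ G of the same order as u with ε_g(u) ≠ 0. -/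
open MonoidAlgebra Finset
open scoped Classical

private lemma isConj_orderOf_eq {G : Type*} [Group G] {a b : G} (h : IsConj a b) :
    orderOf a = orderOf b := by
  rw [isConj_iff] at h
  obtain ⟨c, rfl⟩ := h
  have hsc : SemiconjBy c a (c * a * c⁻¹) := by
    simp [SemiconjBy, mul_assoc]
  exact SemiconjBy.orderOf_eq c hsc

/-- First case of the inductive step of the main theorem: `N` is a nontrivial normal
`p`-subgroup of the finite solvable group `G`, the image `ū` of the torsion unit `u` in
`ℤ(G/N)` has the same order as `u` and has a nonzero partial augmentation at a class of the
same order, and partial augmentations of `u` vanish at elements of strictly greater order.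
Then `u` has a nonzero partial augmentation at an element of the same order. -/
theorem inductive_step_case_one {G : Type*} [Group G] [Fintype G] [Group.IsSolvable G]
    (p : ℕ) [Fact p.Prime] (N : Subgroup G) [N.Normal] (hNbot : N ≠ ⊥) (hN : IsPGroup p N)
    (u : (MonoidAlgebra ℤ G)ˣ) (htor : IsOfFinOrder u)
    (haug : augment (u : MonoidAlgebra ℤ G) = 1)
    (ubar : (MonoidAlgebra ℤ (G ⧸ N))ˣ)
    (hubar : ubar =
      Units.map (MonoidAlgebra.mapDomainRingHom ℤ (QuotientGroup.mk' N)).toMonoidHom u)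
    (horder : orderOf ubar = orderOf u)
    (x : G) (hx : orderOf (QuotientGroup.mk' N x) = orderOf ubar)
    (hxaug : partialAug (QuotientGroup.mk' N x) (ubar : MonoidAlgebra ℤ (G ⧸ N)) ≠ 0)
    (hgreater : ∀ g : G, orderOf u < orderOf g → partialAug g (u : MonoidAlgebra ℤ G) = 0) :
    ∃ g : G, orderOf g = orderOf u ∧ partialAug g (u : MonoidAlgebra ℤ G) ≠ 0 := by
  classical
  set π : G →* G ⧸ N := QuotientGroup.mk' N with hπ
  set v : MonoidAlgebra ℤ G := (u : MonoidAlgebra ℤ G) with hv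
  set w : MonoidAlgebra ℤ (G ⧸ N) := (ubar : MonoidAlgebra ℤ (G ⧸ N)) with hw
  have hwdef : w.coeff = Finsupp.mapDomain π v.coeff := by
    rw [hw, hubar]; rfl
  -- coefficient formula for the image
  have hcoef : ∀ h : G ⧸ N, w.coeff h = ∑ g : G, if π g = h then v.coeff g else 0 := by
    intro h
    rw [hwdef, Finsupp.mapDomain, Finsupp.sum_apply, Finsupp.sum]
    simp only [Finsupp.single_apply]
    refine Finset.sum_subset (Finset.subset_univ _) ?_
    intro g _ hg
    simp only [Finsupp.mem_support_iff, not_not] at hg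
    simp [hg]
  -- partial augmentation of the image is a sum over G
  have hfib := Finset.sum_fiberwise Finset.univ (fun g : G => π g)
    (fun g => if IsConj (π x) (π g) then v.coeff g else 0)
  have key : (∑ g : G, if IsConj (π x) (π g) then v.coeff g else 0) = partialAug (π x) w := by
    rw [← hfib, partialAug]
    refine Finset.sum_congr rfl fun h _ => ?_
    by_cases hch : IsConj (π x) h
    · rw [if_pos hch, hcoef h]
      conv_rhs => rw [← Finset.sum_filter]
      refine Finset.sum_congr rfl fun g hg => ?_
      simp only [Finset.mem_filter] at hg
      rw [hg.2, if_pos hch]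
    · rw [if_neg hch]
      refine Finset.sum_eq_zero fun g hg => ?_
      simp only [Finset.mem_filter] at hg
      rw [hg.2, if_neg hch]
  have hsum : (∑ g : G, if IsConj (π x) (π g) then v.coeff g else 0) ≠ 0 := by
    rw [key]; exact hxaug
  -- split by conjugacy classes of G
  rw [← Finset.sum_fiberwise Finset.univ (ConjClasses.mk : G → ConjClasses G)
    (fun g => if IsConj (π x) (π g) then v.coeff g else 0)] at hsum
  obtain ⟨c, _, hc⟩ := Finset.exists_ne_zero_of_sum_ne_zero hsum
  obtain ⟨g₁, hg₁mem, hg₁⟩ := Finset.exists_ne_zero_of_sum_ne_zero hc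
  simp only [Finset.mem_filter] at hg₁mem
  have hconj1 : IsConj (π x) (π g₁) := by
    by_contra hcon
    rw [if_neg hcon] at hg₁
    exact hg₁ rfl
  -- the inner sum equals the partial augmentation at g₁
  have hinner : (∑ g ∈ Finset.univ.filter (fun g => ConjClasses.mk g = c),
      (if IsConj (π x) (π g) then v.coeff g else 0)) = partialAug g₁ v := by
    rw [partialAug, Finset.sum_filter]
    refine Finset.sum_congr rfl fun g _ => ?_
    by_cases hgc : ConjClasses.mk g = c
    · have hcj : IsConj g₁ g := by
        rw [← ConjClasses.mk_eq_mk_iff_isConj, hg₁mem.2, hgc]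
      rw [if_pos hgc, if_pos (hconj1.trans (π.map_isConj hcj)), if_pos hcj]
    · have hncj : ¬ IsConj g₁ g := fun h =>
        hgc ((ConjClasses.mk_eq_mk_iff_isConj.2 h).symm.trans hg₁mem.2)
      rw [if_neg hgc, if_neg hncj]
  rw [hinner] at hc
  -- order computations
  have horder1 : orderOf (π g₁) = orderOf u := by
    rw [← isConj_orderOf_eq hconj1, hx, horder]
  have hdvd : orderOf (π g₁) ∣ orderOf g₁ := orderOf_map_dvd π g₁
  have hle : orderOf g₁ ≤ orderOf u := by
    by_contra hlt
    exact hc (hgreater g₁ (lt_of_not_ge hlt))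
  have hge : orderOf u ≤ orderOf g₁ := by
    rw [← horder1]
    exact Nat.le_of_dvd (orderOf_pos g₁) hdvd
  exact ⟨g₁, le_antisymm hle hge, hc⟩
end
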